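/- The language Pal = {w w^R : w ∈ {0,1}*} of even-length binary palindromes is not in REG/n; i.e., there do not exist an advice function h : ℕ → Γ* with |h(n)| = n and a regular language L over {0,1} × Γ such that for all x ∈ {0,1}*, x ∈ Pal iff ⟨x, h(|x|)⟩ ∈ L. -/

import Mathlib

/-- A language `P` over `σ` is in `REG/n` if there are a finite advice
alphabet `Γ`, an advice function `h : ℕ → Γ*` with `|h n| = n`, and a regular
language `L` over the track alphabet `σ × Γ` such that `x ∈ P` iff the track
string `⟨x, h(|x|)⟩` belongs to `L`. -/
def InREGn {σ : Type} (P : Language σ) : Prop :=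
  ∃ (Γ : Type) (_ : Fintype Γ) (h : ℕ → List Γ),
    (∀ n, (h n).length = n) ∧
    ∃ L : Language (σ × Γ), L.IsRegular ∧
      ∀ x : List σ, x ∈ P ↔ x.zip (h x.length) ∈ L

/-- The language `Pal = {w w^R : w ∈ {0,1}*}` of even-length binary
palindromes (over the alphabet `Bool`) is not in `REG/n`. -/
theorem pal_not_in_REGn :
    ¬ InREGn { x : List Bool | ∃ w : List Bool, x = w ++ w.reverse } := by
  rintro ⟨Γ, _, h, hlen, L, ⟨Q, _, M, rfl⟩, hspec⟩
  set n := Fintype.card Q with hn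
  set a := (h (n + n)).take n with ha
  set b := (h (n + n)).drop n with hb
  have hab : a ++ b = h (n + n) := List.take_append_drop n _
  have halen : a.length = n := by
    simp [ha, hlen]
  have hcard : Fintype.card Q < Fintype.card (List.Vector Bool n) := by
    rw [card_vector]
    simpa using Nat.lt_two_pow_self (n := n)
  obtain ⟨v, v', hne, heq⟩ := Fintype.exists_ne_map_eq_of_card_lt
    (fun v : List.Vector Bool n => M.evalFrom M.start (v.toList.zip a)) hcard
  set w := v.toList with hw
  set w' := v'.toList with hw'
  have hwlen : w.length = n := v.toList_length
  have hw'len : w'.length = n := v'.toList_length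
  have key : ∀ u : List Bool, u.length = n →
      ((u ++ w.reverse).zip (h (u ++ w.reverse).length) ∈ M.accepts ↔
      M.evalFrom (M.evalFrom M.start (u.zip a)) (w.reverse.zip b) ∈ M.accept) := by
    intro u hu
    have hL : (u ++ w.reverse).length = n + n := by simp [hu, hwlen]
    rw [hL, ← hab, List.zip_append (by rw [hu, halen]), DFA.mem_accepts]
    simp [DFA.eval, DFA.evalFrom, List.foldl_append]
  have h1 : (w ++ w.reverse).zip (h (w ++ w.reverse).length) ∈ M.accepts :=
    (hspec _).mp ⟨w, rfl⟩
  have h2 : w' ++ w.reverse ∈ { x : List Bool | ∃ u : List Bool, x = u ++ u.reverse } := by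
    apply (hspec _).mpr
    rw [key w' hw'len, ← heq, ← key w hwlen]
    exact h1
  obtain ⟨u, hu⟩ := h2
  have hlu : w'.length = u.length := by
    have := congrArg List.length hu
    simp [hw'len, hwlen] at this
    omega
  obtain ⟨e1, e2⟩ := List.append_inj hu hlu
  have : w = u := by
    have := congrArg List.reverse e2
    simpa using this
  exact hne (List.Vector.eq v v' (by rw [← hw, ← hw', e1, ← this]))
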